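/- Let n ≥ 1 and let r₁, …, r_n be pairwise distinct positive real numbers. Let X₁, …, X_n be independent random variables with X_i exponentially distributed with rate r_i. Then for every real t ≥ 0, P(X₁ + ⋯ + X_n ≤ t) = 1 − Σ_{i=1}^n ( Π_{j ≠ i} r_j/(r_j − r_i) ) · exp(−r_i·t). -/

import Mathlib

open MeasureTheory ProbabilityTheory

namespace HypoAux

open Real Set
open scoped ENNReal NNReal

noncomputable def A {n : ℕ} (r : Fin n → ℝ) (i : Fin n) : ℝ :=
  ∏ j ∈ Finset.univ.erase i, r j / (r j - r i)

noncomputable def F {n : ℕ} (r : Fin n → ℝ) (t : ℝ) : ℝ :=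
  1 - ∑ i, A r i * Real.exp (-(r i * t))

lemma sum_A_eq_one {n : ℕ} (hn : 0 < n) {r : Fin n → ℝ} (hinj : Function.Injective r) :
    ∑ i, A r i = 1 := by
  haveI : Nonempty (Fin n) := ⟨⟨0, hn⟩⟩
  have h := Lagrange.sum_basis (v := r) (s := Finset.univ) hinj.injOn Finset.univ_nonempty
  have h0 := congrArg (Polynomial.eval (0:ℝ)) h
  rw [Polynomial.eval_finset_sum, Polynomial.eval_one] at h0
  rw [← h0]
  refine Finset.sum_congr rfl fun i _ => ?_
  rw [Lagrange.basis, Polynomial.eval_prod, A]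
  refine Finset.prod_congr rfl fun j hj => ?_
  have hji : r j ≠ r i := fun h => (Finset.mem_erase.1 hj).1 (hinj h)
  rw [Lagrange.basisDivisor]
  simp only [Polynomial.eval_mul, Polynomial.eval_C, Polynomial.eval_sub, Polynomial.eval_X]
  have h1 : r j - r i ≠ 0 := sub_ne_zero.2 hji
  have h2 : r i - r j ≠ 0 := sub_ne_zero.2 hji.symm
  field_simp
  ring

lemma A_succ {n : ℕ} (r : Fin (n + 1) → ℝ) (hinj : Function.Injective r) (k : Fin n) :
    A r k.succ = (r 0 / (r 0 - r k.succ)) * A (r ∘ Fin.succ) k := by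
  rw [A, A]
  have h1 : (Finset.univ : Finset (Fin (n+1))) = insert 0 (Finset.univ.map (Fin.succEmb n)) := by
    ext i
    simp [Fin.eq_zero_or_eq_succ i, eq_comm]
  rw [h1, Finset.erase_insert_of_ne (by simp [Fin.succ_ne_zero k, eq_comm] : (0:Fin (n+1)) ≠ k.succ)]
  rw [show (k.succ : Fin (n+1)) = Fin.succEmb n k from rfl, ← Finset.map_erase, Finset.prod_insert (by simp), Finset.prod_map]
  rfl


lemma integral_exp_mul {c : ℝ} (hc : c ≠ 0) (t : ℝ) :
    ∫ x in (0:ℝ)..t, Real.exp (c * x) = (Real.exp (c * t) - 1) / c := by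
  have D : ∀ x : ℝ, HasDerivAt (fun y : ℝ => Real.exp (c * y) / c) (Real.exp (c * x)) x := by
    intro x
    have := ((hasDerivAt_id x).const_mul c).exp
    simpa [mul_comm, mul_div_cancel_left₀ _ hc] using this.div_const c
  rw [intervalIntegral.integral_eq_sub_of_hasDerivAt (fun x _ => D x)
    (Continuous.intervalIntegrable (by continuity) _ _)]
  simp [sub_div]

lemma continuous_F {n : ℕ} (r : Fin n → ℝ) : Continuous (F r) := by
  unfold F
  continuity


lemma integral_step {n : ℕ} (r : Fin (n+1) → ℝ) (hr : ∀ i, 0 < r i)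
    (hinj : Function.Injective r) (t : ℝ) :
    ∫ x in (0:ℝ)..t, r 0 * Real.exp (-(r 0 * x)) * F (r ∘ Fin.succ) (t - x) = F r t := by
  have hc : ∀ k : Fin n, r k.succ - r 0 ≠ 0 :=
    fun k => sub_ne_zero.2 fun h => Fin.succ_ne_zero k (hinj h)
  have key : ∀ x : ℝ, r 0 * rexp (-(r 0 * x)) * F (r ∘ Fin.succ) (t - x)
      = r 0 * rexp ((-r 0) * x)
        - ∑ k : Fin n, (A (r ∘ Fin.succ) k * r 0 * rexp (-(r k.succ * t)))
            * rexp ((r k.succ - r 0) * x) := by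
    intro x
    rw [F, mul_sub, mul_one, Finset.mul_sum]
    congr 1
    · rw [neg_mul]
    refine Finset.sum_congr rfl fun k _ => ?_
    have h1 : r 0 * rexp (-(r 0 * x)) * (A (r ∘ Fin.succ) k * rexp (-((r ∘ Fin.succ) k * (t - x))))
        = A (r ∘ Fin.succ) k * r 0 * (rexp (-(r 0 * x)) * rexp (-(r k.succ * (t - x)))) := by
      simp only [Function.comp_apply]; ring
    rw [h1, ← Real.exp_add,
      show -(r 0 * x) + -(r k.succ * (t - x)) = -(r k.succ * t) + (r k.succ - r 0) * x by ring,
      Real.exp_add, mul_assoc]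
    ring
  have hi1 : IntervalIntegrable (fun x => r 0 * rexp ((-r 0) * x)) volume 0 t :=
    Continuous.intervalIntegrable (by continuity) _ _
  have hi2 : ∀ k : Fin n, IntervalIntegrable
      (fun x => (A (r ∘ Fin.succ) k * r 0 * rexp (-(r k.succ * t))) * rexp ((r k.succ - r 0) * x))
      volume 0 t := fun k => Continuous.intervalIntegrable (by continuity) _ _
  rw [intervalIntegral.integral_congr (g := fun x => r 0 * rexp ((-r 0) * x)
      - ∑ k : Fin n, (A (r ∘ Fin.succ) k * r 0 * rexp (-(r k.succ * t)))
          * rexp ((r k.succ - r 0) * x)) (fun x _ => key x)]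
  have hsum : IntervalIntegrable (fun x => ∑ k : Fin n,
      (A (r ∘ Fin.succ) k * r 0 * rexp (-(r k.succ * t))) * rexp ((r k.succ - r 0) * x)) volume 0 t :=
    Continuous.intervalIntegrable (continuous_finset_sum _ fun k _ => by continuity) _ _
  rw [intervalIntegral.integral_sub hi1 hsum,
    intervalIntegral.integral_finset_sum (fun k _ => hi2 k),
    intervalIntegral.integral_const_mul, integral_exp_mul (neg_ne_zero.2 (hr 0).ne') t]
  simp_rw [intervalIntegral.integral_const_mul, integral_exp_mul (hc _) t]
  -- now the algebra
  have hA0 : A r 0 = 1 - ∑ k : Fin n, A r k.succ := by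
    have h := sum_A_eq_one (Nat.succ_pos n) hinj
    rw [Fin.sum_univ_succ] at h
    linarith
  have main : ∀ k : Fin n,
      A (r ∘ Fin.succ) k * r 0 * rexp (-(r k.succ * t))
        * ((rexp ((r k.succ - r 0) * t) - 1) / (r k.succ - r 0))
      = A r k.succ * rexp (-(r k.succ * t)) - A r k.succ * rexp (-(r 0 * t)) := by
    intro k
    have he : rexp (-(r k.succ * t)) * rexp ((r k.succ - r 0) * t) = rexp (-(r 0 * t)) := by
      rw [← Real.exp_add]; ring_nf
    have h0 : r 0 - r k.succ ≠ 0 := fun h => hc k (by linarith [sub_eq_zero.1 h])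
    have h2 : rexp (-(r k.succ * t)) * ((rexp ((r k.succ - r 0) * t) - 1) / (r k.succ - r 0))
        = (rexp (-(r 0 * t)) - rexp (-(r k.succ * t))) / (r k.succ - r 0) := by
      rw [mul_div_assoc', mul_sub, mul_one, he]
    rw [A_succ r hinj k, mul_assoc, h2]
    rw [show r 0 - r k.succ = -(r k.succ - r 0) from by ring, div_neg]
    ring
  rw [Finset.sum_congr rfl (fun k _ => main k)]
  rw [F, Fin.sum_univ_succ, hA0, Finset.sum_sub_distrib]
  have hS : ∑ k : Fin n, A r k.succ * rexp (-(r 0 * t)) = (∑ k : Fin n, A r k.succ) * rexp (-(r 0 * t)) :=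
    (Finset.sum_mul _ _ _).symm
  rw [hS]
  have : rexp ((-r 0) * t) = rexp (-(r 0 * t)) := by rw [neg_mul]
  rw [this]
  have hE : r 0 * ((rexp (-(r 0 * t)) - 1) / (-r 0)) = 1 - rexp (-(r 0 * t)) := by
    have hr0 : r 0 ≠ 0 := (hr 0).ne'
    rw [mul_comm, div_neg, neg_mul, div_mul_cancel₀ _ hr0, neg_sub]
  rw [hE]
  ring


lemma expMeasure_eq_withDensity (c : ℝ) :
    expMeasure c = volume.withDensity (exponentialPDF c) := rfl

lemma measurable_ofReal_ite {n : ℕ} (r' : Fin n → ℝ) (t : ℝ) :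
    Measurable fun x : ℝ => ENNReal.ofReal (if x ≤ t then F r' (t - x) else 0) := by
  apply ENNReal.measurable_ofReal.comp
  exact Measurable.ite measurableSet_Iic
    ((continuous_F r').measurable.comp (measurable_const.sub measurable_id)) measurable_const

lemma pi_cdf : ∀ (n : ℕ) (r : Fin n → ℝ), (∀ i, 0 < r i) → Function.Injective r → ∀ t : ℝ,
    (t < 0 → Measure.pi (fun i => expMeasure (r i)) {x | ∑ i, x i ≤ t} = 0) ∧
    (0 ≤ t → 0 ≤ F r t ∧
      Measure.pi (fun i => expMeasure (r i)) {x | ∑ i, x i ≤ t} = ENNReal.ofReal (F r t)) := by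
  intro n
  induction n with
  | zero =>
      intro r hr hinj t
      constructor
      · intro ht
        have hset : {x : Fin 0 → ℝ | ∑ i, x i ≤ t} = ∅ := by
          ext x; simp; linarith
        rw [hset]; simp
      · intro ht
        haveI : ∀ i : Fin 0, IsProbabilityMeasure (expMeasure (r i)) :=
          fun i => isProbabilityMeasure_expMeasure (hr i)
        refine ⟨by simp [F], ?_⟩
        have hset : {x : Fin 0 → ℝ | ∑ i, x i ≤ t} = Set.univ := by
          ext x; simp [ht]
        rw [hset, F]
        simp
  | succ n IH =>
      intro r hr hinj t
      haveI : ∀ i : Fin (n+1), IsProbabilityMeasure (expMeasure (r i)) :=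
        fun i => isProbabilityMeasure_expMeasure (hr i)
      set r' : Fin n → ℝ := fun i => r i.succ with hr'def
      have hinj' : Function.Injective r' := fun i j h => Fin.succ_injective n (hinj h)
      have hr'pos : ∀ i, 0 < r' i := fun i => hr _
      haveI : ∀ i : Fin n, IsProbabilityMeasure (expMeasure (r' i)) :=
        fun i => isProbabilityMeasure_expMeasure (hr'pos i)
      have hmp := measurePreserving_piFinSuccAbove (fun i => expMeasure (r i)) 0
      simp only [Fin.succAbove_zero] at hmp
      have hdecomp : Measure.pi (fun i => expMeasure (r i)) {x | ∑ i, x i ≤ t}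
          = ((expMeasure (r 0)).prod (Measure.pi fun i : Fin n => expMeasure (r' i)))
              {p : ℝ × (Fin n → ℝ) | p.1 + ∑ i, p.2 i ≤ t} := by
        have h2 := hmp.measure_preimage_equiv {p : ℝ × (Fin n → ℝ) | p.1 + ∑ i, p.2 i ≤ t}
        refine Eq.trans ?_ h2
        congr 1
        ext x
        simp [MeasurableEquiv.piFinSuccAbove, Fin.insertNthEquiv, Fin.removeNth, Fin.tail,
          Fin.sum_univ_succ]
      have hAmeas : MeasurableSet {p : ℝ × (Fin n → ℝ) | p.1 + ∑ i, p.2 i ≤ t} := by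
        apply measurableSet_le _ measurable_const
        exact measurable_fst.add (Finset.measurable_sum _ fun i _ => (measurable_pi_apply i).comp measurable_snd)
      have hslice : ∀ x : ℝ,
          (Prod.mk x ⁻¹' {p : ℝ × (Fin n → ℝ) | p.1 + ∑ i, p.2 i ≤ t})
            = {y : Fin n → ℝ | ∑ i, y i ≤ t - x} := by
        intro x; ext y
        simp only [Set.mem_preimage, Set.mem_setOf_eq]
        constructor <;> intro h <;> linarith
      have hsliceval : ∀ x : ℝ,
          Measure.pi (fun i : Fin n => expMeasure (r' i)) {y : Fin n → ℝ | ∑ i, y i ≤ t - x}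
            = ENNReal.ofReal (if x ≤ t then F r' (t - x) else 0) := by
        intro x
        by_cases hx : x ≤ t
        · rw [if_pos hx, ((IH r' hr'pos hinj' (t - x)).2 (by linarith)).2]
        · rw [if_neg hx, (IH r' hr'pos hinj' (t - x)).1 (by linarith), ENNReal.ofReal_zero]
      have hint : Measure.pi (fun i => expMeasure (r i)) {x | ∑ i, x i ≤ t}
          = ∫⁻ x, exponentialPDF (r 0) x
              * ENNReal.ofReal (if x ≤ t then F r' (t - x) else 0) ∂volume := by
        rw [hdecomp, Measure.prod_apply hAmeas]
        rw [lintegral_congr fun x => by rw [hslice x, hsliceval x]]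
        have hpdfm : Measurable (exponentialPDF (r 0)) :=
          (measurable_exponentialPDFReal (r 0)).ennreal_ofReal
        rw [expMeasure_eq_withDensity,
          lintegral_withDensity_eq_lintegral_mul _ hpdfm (measurable_ofReal_ite r' t)]
        rfl
      constructor
      · intro ht
        have hzero : ∀ x : ℝ, exponentialPDF (r 0) x
            * ENNReal.ofReal (if x ≤ t then F r' (t - x) else 0) = (fun _ : ℝ => (0:ℝ≥0∞)) x := by
          intro x
          by_cases hx : 0 ≤ x
          · rw [if_neg (by linarith), ENNReal.ofReal_zero, mul_zero]
          · rw [exponentialPDF_of_neg (lt_of_not_ge hx), zero_mul]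
        rw [hint, lintegral_congr hzero, lintegral_zero]
      · intro ht
        have hFnn : ∀ x ∈ Icc (0:ℝ) t, 0 ≤ F r' (t - x) :=
          fun x hx => ((IH r' hr'pos hinj' (t - x)).2 (by simp at hx; linarith [hx.2])).1
        set G : ℝ → ℝ := fun x => r 0 * rexp (-(r 0 * x)) * F r' (t - x) with hGdef
        have hGcont : Continuous G := by
          apply Continuous.mul
          · continuity
          · exact (continuous_F r').comp (continuous_const.sub continuous_id)
        have hprod : ∀ x : ℝ, exponentialPDF (r 0) x
            * ENNReal.ofReal (if x ≤ t then F r' (t - x) else 0)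
            = ENNReal.ofReal (Set.indicator (Icc 0 t) G x) := by
          intro x
          rw [exponentialPDF_eq, ← ENNReal.ofReal_mul (by split_ifs with h; exacts [mul_nonneg (hr 0).le (exp_nonneg _), le_rfl])]
          congr 1
          by_cases h1 : 0 ≤ x <;> by_cases h2 : x ≤ t
          · rw [if_pos h1, if_pos h2, Set.indicator_of_mem (by exact ⟨h1, h2⟩)]
          · rw [if_pos h1, if_neg h2, Set.indicator_of_notMem (fun h => h2 h.2), mul_zero]
          · rw [if_neg h1, Set.indicator_of_notMem (fun h => h1 h.1), zero_mul]
          · rw [if_neg h1, Set.indicator_of_notMem (fun h => h1 h.1), zero_mul]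
        have hIndnn : ∀ x : ℝ, 0 ≤ Set.indicator (Icc 0 t) G x := by
          intro x
          apply Set.indicator_nonneg
          intro y hy
          have h := hFnn y hy
          exact mul_nonneg (mul_nonneg (hr 0).le (exp_nonneg _)) h
        have hIntInd : Integrable (Set.indicator (Icc 0 t) G) volume :=
          (hGcont.integrableOn_Icc).integrable_indicator measurableSet_Icc
        have hFrt : ∫ x, Set.indicator (Icc 0 t) G x ∂volume = F r t := by
          rw [MeasureTheory.integral_indicator measurableSet_Icc,
            MeasureTheory.integral_Icc_eq_integral_Ioc,
            ← intervalIntegral.integral_of_le ht]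
          exact integral_step r hr hinj t
        constructor
        · rw [← hFrt]
          exact integral_nonneg hIndnn
        · rw [hint, lintegral_congr hprod,
            ← MeasureTheory.ofReal_integral_eq_lintegral_ofReal hIntInd
              (Filter.Eventually.of_forall hIndnn), hFrt]

end HypoAux

open HypoAux in
theorem stmt_10 (n : ℕ) (hn : 1 ≤ n) (r : Fin n → ℝ) (hr : ∀ i, 0 < r i)
    (hdist : ∀ i j, i ≠ j → r i ≠ r j)
    {Ω : Type*} [MeasurableSpace Ω] (P : Measure Ω) [IsProbabilityMeasure P]
    (X : Fin n → Ω → ℝ) (hX : ∀ i, Measurable (X i))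
    (hindep : iIndepFun X P)
    (hlaw : ∀ i, Measure.map (X i) P = expMeasure (r i)) :
    ∀ t : ℝ, 0 ≤ t →
      (P {ω | ∑ i, X i ω ≤ t}).toReal
        = 1 - ∑ i, (∏ j ∈ Finset.univ.erase i, r j / (r j - r i)) * Real.exp (-(r i * t)) := by
  intro t ht
  have hinj : Function.Injective r := fun i j h => by
    by_contra hij
    exact hdist i j hij h
  haveI : ∀ i, IsProbabilityMeasure (expMeasure (r i)) :=
    fun i => isProbabilityMeasure_expMeasure (hr i)
  have hmeas : Measurable (fun ω i => X i ω) := measurable_pi_lambda _ hX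
  have hmap : Measure.map (fun ω i => X i ω) P = Measure.pi (fun i => expMeasure (r i)) := by
    refine (Measure.pi_eq fun s hs => ?_).symm
    rw [Measure.map_apply hmeas (MeasurableSet.univ_pi hs)]
    have hpre : (fun ω i => X i ω) ⁻¹' (Set.pi Set.univ s) = ⋂ i, X i ⁻¹' s i := by
      ext ω; simp [Set.mem_pi]
    rw [hpre, hindep.meas_iInter (fun i => ⟨s i, hs i, rfl⟩)]
    exact Finset.prod_congr rfl fun i _ => by rw [← hlaw i, Measure.map_apply (hX i) (hs i)]
  have hmeasset : MeasurableSet {x : Fin n → ℝ | ∑ i, x i ≤ t} :=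
    measurableSet_le (Finset.measurable_sum _ fun i _ => measurable_pi_apply i) measurable_const
  have h1 : P {ω | ∑ i, X i ω ≤ t} = ENNReal.ofReal (F r t) := by
    have hset : {ω | ∑ i, X i ω ≤ t} = (fun ω i => X i ω) ⁻¹' {x : Fin n → ℝ | ∑ i, x i ≤ t} := rfl
    rw [hset, ← Measure.map_apply hmeas hmeasset, hmap, ((pi_cdf n r hr hinj t).2 ht).2]
  rw [h1, ENNReal.toReal_ofReal ((pi_cdf n r hr hinj t).2 ht).1]
  rfl
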